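/- arXiv:0809.1408 — 2 statements merged into one kernel-verified Lean document; each statement's English description precedes it below -/
import Mathlib

section
/- SU(4) = H₁·Sp(2): every g ∈ SU(4) can be written as g = h·f, where h ∈ SU(4) is block diagonal of the form diag(u, V) with u ∈ ℂ, |u| = 1, V a 3×3 unitary matrix and u·det V = 1 (i.e. h ∈ S(U(1)×U(3))), and f ∈ SU(4) satisfies f J fᵀ = J (i.e. f lies in the compact symplectic group Sp(2) = SU(4) ∩ Sp(4,ℂ)). -/
open Matrix ComplexConjugate

/-- The standard 4×4 antisymmetric matrix `J = [[0,E₂],[−E₂,0]]`. -/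
def Jstd : Matrix (Fin 4) (Fin 4) ℂ :=
  !![0,0,1,0; 0,0,0,1; -1,0,0,0; 0,-1,0,0]

/-- The `Sp(2)` matrix with first column `w` and second column `a`. -/
noncomputable def Fmat (w a : Fin 4 → ℂ) : Matrix (Fin 4) (Fin 4) ℂ :=
  !![w 0, a 0, -conj (w 2), -conj (a 2);
     w 1, a 1, -conj (w 3), -conj (a 3);
     w 2, a 2,  conj (w 0),  conj (a 0);
     w 3, a 3,  conj (w 1),  conj (a 1)]

lemma Fmat_symp (w a : Fin 4 → ℂ) :
    Fmat w a * Jstd = Jstd * (Fmat w a).map (starRingEnd ℂ) := by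
  ext i j
  fin_cases i <;> fin_cases j <;>
    simp [Fmat, Jstd, Matrix.mul_apply, Fin.sum_univ_four, Matrix.vecHead, Matrix.vecTail]

lemma Fmat_col0 (w a : Fin 4 → ℂ) (i : Fin 4) : Fmat w a i 0 = w i := by
  fin_cases i <;> simp [Fmat]

lemma Fmat_unitary (w a : Fin 4 → ℂ)
    (hw : conj (w 0) * w 0 + conj (w 1) * w 1 + conj (w 2) * w 2 + conj (w 3) * w 3 = 1)
    (ha : conj (a 0) * a 0 + conj (a 1) * a 1 + conj (a 2) * a 2 + conj (a 3) * a 3 = 1)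
    (h1 : conj (w 0) * a 0 + conj (w 1) * a 1 + conj (w 2) * a 2 + conj (w 3) * a 3 = 0)
    (h2 : w 0 * a 2 + w 1 * a 3 - w 2 * a 0 - w 3 * a 1 = 0) :
    star (Fmat w a) * Fmat w a = 1 := by
  have h1' := congrArg (starRingEnd ℂ) h1
  have h2' := congrArg (starRingEnd ℂ) h2
  have hw' := congrArg (starRingEnd ℂ) hw
  have ha' := congrArg (starRingEnd ℂ) ha
  simp only [map_add, map_sub, _root_.map_mul, map_zero, _root_.map_one,
    Complex.conj_conj] at h1' h2' hw' ha'
  ext i j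
  fin_cases i <;> fin_cases j <;>
    simp [Fmat, Matrix.mul_apply, Fin.sum_univ_four, Matrix.star_apply, Matrix.one_apply,
      Matrix.vecHead, Matrix.vecTail] <;>
    first
      | ring1
      | linear_combination hw
      | linear_combination ha
      | linear_combination hw'
      | linear_combination ha'
      | linear_combination h1
      | linear_combination h1'
      | linear_combination h2
      | linear_combination h2'
      | linear_combination -h2
      | linear_combination -h2'

lemma det_fin_four' (A : Matrix (Fin 4) (Fin 4) ℂ) :
    det A =
      A 0 0 * (A 1 1 * A 2 2 * A 3 3 - A 1 1 * A 2 3 * A 3 2 - A 1 2 * A 2 1 * A 3 3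
        + A 1 2 * A 2 3 * A 3 1 + A 1 3 * A 2 1 * A 3 2 - A 1 3 * A 2 2 * A 3 1)
      - A 0 1 * (A 1 0 * A 2 2 * A 3 3 - A 1 0 * A 2 3 * A 3 2 - A 1 2 * A 2 0 * A 3 3
        + A 1 2 * A 2 3 * A 3 0 + A 1 3 * A 2 0 * A 3 2 - A 1 3 * A 2 2 * A 3 0)
      + A 0 2 * (A 1 0 * A 2 1 * A 3 3 - A 1 0 * A 2 3 * A 3 1 - A 1 1 * A 2 0 * A 3 3
        + A 1 1 * A 2 3 * A 3 0 + A 1 3 * A 2 0 * A 3 1 - A 1 3 * A 2 1 * A 3 0)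
      - A 0 3 * (A 1 0 * A 2 1 * A 3 2 - A 1 0 * A 2 2 * A 3 1 - A 1 1 * A 2 0 * A 3 2
        + A 1 1 * A 2 2 * A 3 0 + A 1 2 * A 2 0 * A 3 1 - A 1 2 * A 2 1 * A 3 0) := by
  simp [Matrix.det_succ_row_zero, Fin.sum_univ_succ, Fin.succAbove]
  ring

lemma Fmat_det (w a : Fin 4 → ℂ)
    (hw : conj (w 0) * w 0 + conj (w 1) * w 1 + conj (w 2) * w 2 + conj (w 3) * w 3 = 1)
    (ha : conj (a 0) * a 0 + conj (a 1) * a 1 + conj (a 2) * a 2 + conj (a 3) * a 3 = 1)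
    (h1 : conj (w 0) * a 0 + conj (w 1) * a 1 + conj (w 2) * a 2 + conj (w 3) * a 3 = 0)
    (h2 : w 0 * a 2 + w 1 * a 3 - w 2 * a 0 - w 3 * a 1 = 0) :
    det (Fmat w a) = 1 := by
  have h1' := congrArg (starRingEnd ℂ) h1
  have h2' := congrArg (starRingEnd ℂ) h2
  simp only [map_add, map_sub, _root_.map_mul, map_zero, Complex.conj_conj] at h1' h2'
  rw [det_fin_four']
  simp [Fmat, Matrix.vecHead, Matrix.vecTail]
  linear_combination (conj (a 0) * a 0 + conj (a 1) * a 1 + conj (a 2) * a 2 + conj (a 3) * a 3) * hw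
    + ha
    - (conj (w 0) * a 0 + conj (w 1) * a 1 + conj (w 2) * a 2 + conj (w 3) * a 3) * h1'
    - (conj (w 0) * conj (a 2) + conj (w 1) * conj (a 3) - conj (w 2) * conj (a 0)
        - conj (w 3) * conj (a 1)) * h2

/-- There is a nonzero solution to the two linear constraints. -/
lemma exists_orth (w : Fin 4 → ℂ) :
    ∃ a : Fin 4 → ℂ, a ≠ 0 ∧
      (conj (w 0) * a 0 + conj (w 1) * a 1 + conj (w 2) * a 2 + conj (w 3) * a 3 = 0) ∧
      (w 0 * a 2 + w 1 * a 3 - w 2 * a 0 - w 3 * a 1 = 0) := by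
  let L : (Fin 4 → ℂ) →ₗ[ℂ] ℂ × ℂ :=
    { toFun := fun v => (conj (w 0) * v 0 + conj (w 1) * v 1 + conj (w 2) * v 2 + conj (w 3) * v 3,
        w 0 * v 2 + w 1 * v 3 - w 2 * v 0 - w 3 * v 1)
      map_add' := by intro x y; simp [Prod.ext_iff]; constructor <;> ring
      map_smul' := by intro c x; simp [Prod.ext_iff, smul_eq_mul]; constructor <;> ring }
  have hni : ¬ Function.Injective L := by
    intro hinj
    have hle := LinearMap.finrank_le_finrank_of_injective hinj
    simp [Module.finrank_pi, Module.finrank_prod] at hle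
  have hker : LinearMap.ker L ≠ ⊥ := fun h => hni (LinearMap.ker_eq_bot.mp h)
  obtain ⟨a, hamem, hane⟩ := Submodule.exists_mem_ne_zero_of_ne_bot hker
  have hLa := (LinearMap.mem_ker.mp hamem)
  rw [Prod.ext_iff] at hLa
  exact ⟨a, hane, hLa.1, hLa.2⟩

/-- A nonzero vector can be rescaled to a "unit" vector. -/
lemma exists_unit_scale (a : Fin 4 → ℂ) (hane : a ≠ 0) :
    ∃ c : ℂ, c ≠ 0 ∧
      conj (c * a 0) * (c * a 0) + conj (c * a 1) * (c * a 1) + conj (c * a 2) * (c * a 2)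
        + conj (c * a 3) * (c * a 3) = 1 := by
  have hex : ∃ i, a i ≠ 0 := by
    by_contra hc
    push_neg at hc
    exact hane (funext hc)
  set n : ℝ := Complex.normSq (a 0) + Complex.normSq (a 1) + Complex.normSq (a 2)
      + Complex.normSq (a 3) with hn
  have npos : 0 < n := by
    have h0 := Complex.normSq_nonneg (a 0)
    have h1 := Complex.normSq_nonneg (a 1)
    have h2 := Complex.normSq_nonneg (a 2)
    have h3 := Complex.normSq_nonneg (a 3)
    obtain ⟨i, hi⟩ := hex
    fin_cases i <;> simp only [Fin.isValue] at hi <;>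
      first
        | (have := Complex.normSq_pos.mpr (show a 0 ≠ 0 from hi); linarith)
        | (have := Complex.normSq_pos.mpr (show a 1 ≠ 0 from hi); linarith)
        | (have := Complex.normSq_pos.mpr (show a 2 ≠ 0 from hi); linarith)
        | (have := Complex.normSq_pos.mpr (show a 3 ≠ 0 from hi); linarith)
  set s : ℝ := Real.sqrt n with hs
  have spos : 0 < s := Real.sqrt_pos.mpr npos
  have hsne : ((s : ℂ)) ≠ 0 := by exact_mod_cast spos.ne'
  have hs2 : (s : ℂ) * (s : ℂ) = (n : ℝ) := by
    rw [← Complex.ofReal_mul, Real.mul_self_sqrt npos.le]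
  refine ⟨(s : ℂ)⁻¹, inv_ne_zero hsne, ?_⟩
  have key : conj (a 0) * a 0 + conj (a 1) * a 1 + conj (a 2) * a 2 + conj (a 3) * a 3
      = (n : ℂ) := by
    rw [hn]
    push_cast [Complex.normSq_eq_conj_mul_self]
    ring
  simp only [_root_.map_mul, map_inv₀, Complex.conj_ofReal]
  field_simp
  linear_combination key - hs2

lemma row_col_zero (M : Matrix (Fin 4) (Fin 4) ℂ) (hu : star M * M = 1)
    (hcol : ∀ j : Fin 4, M j 0 = (1 : Matrix (Fin 4) (Fin 4) ℂ) j 0) :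
    ∀ j : Fin 4, j ≠ 0 → M 0 j = 0 ∧ M j 0 = 0 := by
  intro j hj
  refine ⟨?_, by rw [hcol j]; exact Matrix.one_apply_ne hj⟩
  have hrow := congrFun (congrFun hu 0) j
  simp only [Matrix.mul_apply, Fin.sum_univ_four, Matrix.star_apply, hcol 0, hcol 1, hcol 2,
    hcol 3] at hrow
  simp [Matrix.one_apply, hj, Ne.symm hj] at hrow
  exact hrow

/-- `SU(4) = H₁·Sp(2)`: every `g ∈ SU(4)` factors as `g = h·f` where
`h ∈ SU(4)` is block diagonal `diag(u, V)` (i.e. `h ∈ S(U(1)×U(3))`: all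
entries in row `0` and column `0` off the `(0,0)` slot vanish) and `f ∈ SU(4)`
satisfies `f J fᵀ = J`, i.e. `f` lies in the compact symplectic group
`Sp(2) = SU(4) ∩ Sp(4,ℂ)`. -/
theorem SU4_eq_SU1U3_mul_Sp2 :
    ∀ g ∈ Matrix.specialUnitaryGroup (Fin 4) ℂ,
      ∃ h f : Matrix (Fin 4) (Fin 4) ℂ,
        h ∈ Matrix.specialUnitaryGroup (Fin 4) ℂ ∧
        f ∈ Matrix.specialUnitaryGroup (Fin 4) ℂ ∧
        (∀ j : Fin 4, j ≠ 0 → h 0 j = 0 ∧ h j 0 = 0) ∧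
        f * Jstd * fᵀ = Jstd ∧
        g = h * f := by
  intro g hg
  rw [Matrix.mem_specialUnitaryGroup_iff] at hg
  obtain ⟨hgu, hgd⟩ := hg
  have hgu1 : g * star g = 1 := (Matrix.mem_unitaryGroup_iff).mp hgu
  have hgu2 : star g * g = 1 := (Matrix.mem_unitaryGroup_iff').mp hgu
  -- the first column of the symplectic factor's inverse
  set w : Fin 4 → ℂ := fun i => conj (g 0 i) with hwdef
  have hw : conj (w 0) * w 0 + conj (w 1) * w 1 + conj (w 2) * w 2 + conj (w 3) * w 3 = 1 := by
    have h00 := congrFun (congrFun hgu1 0) 0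
    simp [Matrix.mul_apply, Fin.sum_univ_four, Matrix.star_apply, Matrix.one_apply] at h00
    simp only [hwdef, Complex.conj_conj]
    linear_combination h00
  obtain ⟨a₀, ha₀ne, h1₀, h2₀⟩ := exists_orth w
  obtain ⟨c, hcne, hac⟩ := exists_unit_scale a₀ ha₀ne
  set a : Fin 4 → ℂ := fun i => c * a₀ i with hadef
  have ha : conj (a 0) * a 0 + conj (a 1) * a 1 + conj (a 2) * a 2 + conj (a 3) * a 3 = 1 := hac
  have h1 : conj (w 0) * a 0 + conj (w 1) * a 1 + conj (w 2) * a 2 + conj (w 3) * a 3 = 0 := by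
    simp only [hadef]
    linear_combination c * h1₀
  have h2 : w 0 * a 2 + w 1 * a 3 - w 2 * a 0 - w 3 * a 1 = 0 := by
    simp only [hadef]
    linear_combination c * h2₀
  set F : Matrix (Fin 4) (Fin 4) ℂ := Fmat w a with hF
  have hFu : star F * F = 1 := Fmat_unitary w a hw ha h1 h2
  have hFu' : F * star F = 1 := mul_eq_one_comm.mp hFu
  have hFd : det F = 1 := Fmat_det w a hw ha h1 h2
  have hFs : F * Jstd = Jstd * F.map (starRingEnd ℂ) := Fmat_symp w a
  refine ⟨g * F, star F, ?_, ?_, ?_, ?_, ?_⟩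
  · rw [Matrix.mem_specialUnitaryGroup_iff]
    constructor
    · rw [Matrix.mem_unitaryGroup_iff']
      calc star (g * F) * (g * F) = star F * (star g * g) * F := by
            rw [StarMul.star_mul]; noncomm_ring
        _ = star F * F := by rw [hgu2, mul_one]
        _ = 1 := hFu
    · rw [det_mul, hgd, hFd, one_mul]
  · rw [Matrix.mem_specialUnitaryGroup_iff]
    constructor
    · rw [Matrix.mem_unitaryGroup_iff']
      rw [star_star]
      exact hFu'
    · rw [Matrix.star_eq_conjTranspose, Matrix.det_conjTranspose, hFd]
      simp
  · -- column and row vanishing for h = g * F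
    have hcol : ∀ j : Fin 4, (g * F) j 0 = (1 : Matrix (Fin 4) (Fin 4) ℂ) j 0 := by
      intro j
      have hj := congrFun (congrFun hgu1 j) 0
      rw [← hj]
      simp only [Matrix.mul_apply, Fin.sum_univ_four, Fmat_col0, hF]
      simp [Matrix.star_apply, hwdef]
    have hhu : star (g * F) * (g * F) = 1 := by
      calc star (g * F) * (g * F) = star F * (star g * g) * F := by
            rw [StarMul.star_mul]; noncomm_ring
        _ = star F * F := by rw [hgu2, mul_one]
        _ = 1 := hFu
    exact row_col_zero (g * F) hhu hcol
  · -- symplectic condition for f = star F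
    have htr : (star F)ᵀ = F.map (starRingEnd ℂ) := by
      ext i j
      simp [Matrix.star_apply]
    rw [htr]
    calc star F * Jstd * F.map (starRingEnd ℂ)
        = star F * (Jstd * F.map (starRingEnd ℂ)) := by rw [mul_assoc]
      _ = star F * (F * Jstd) := by rw [hFs]
      _ = (star F * F) * Jstd := by rw [mul_assoc]
      _ = Jstd := by rw [hFu, one_mul]
  · rw [mul_assoc, hFu', mul_one]
end

section
/- BPS equations in six Euclidean dimensions (ν = 1/4): in Cl₆ let Ω = ¼(1 + Γ₁₂₃₄)(1 + Γ₁₂₅₆). Then Ω is an idempotent, and for every antisymmetric F : {1,…,6}² → ℝ one has X_F·Ω = 0 if and only if the following seven equations hold: F₁₂ + F₄₃ + F₆₅ = 0, F₁₃ + F₂₄ = 0, F₁₄ + F₃₂ = 0, F₁₅ + F₂₆ = 0, F₁₆ + F₅₂ = 0, F₃₅ + F₆₄ = 0, F₃₆ + F₄₅ = 0. -/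
/-- The positive-definite quadratic form `Q(x) = x₁² + ⋯ + x_d²` on `ℝ^d`, `d = 6`. -/
noncomputable def Q6 : QuadraticForm ℝ (Fin 6 → ℝ) :=
  QuadraticMap.weightedSumSquares ℝ (fun _ : Fin 6 => (1 : ℝ))

/-- `Γ_a` (`a = 1,…,6`, indexed here by `Fin 6`): the image of the `a`-th
standard basis vector in `Cl_6`. -/
noncomputable def G6 (a : Fin 6) : CliffordAlgebra Q6 :=
  CliffordAlgebra.ι Q6 (Pi.single a 1)

/-- `X_F = ∑_{a,b} F_{ab} Γ_aΓ_b`. -/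
noncomputable def X6 (F : Fin 6 → Fin 6 → ℝ) : CliffordAlgebra Q6 :=
  ∑ a, ∑ b, F a b • (G6 a * G6 b)

/-- The projector of the `ν = 1/4` BPS system in six Euclidean dimensions:
`Ω = ¼(1 + Γ₁₂₃₄)(1 + Γ₁₂₅₆)`. -/
noncomputable def Omega6 : CliffordAlgebra Q6 :=
  (1 / 4 : ℝ) • ((1 + G6 0 * G6 1 * G6 2 * G6 3) * (1 + G6 0 * G6 1 * G6 4 * G6 5))

section Aux

lemma hQ1 (a : Fin 6) : Q6 (Pi.single a 1) = 1 := by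
  simp [Q6, QuadraticMap.weightedSumSquares_apply, Pi.single_apply]

lemma hOrtho {a b : Fin 6} (h : a ≠ b) :
    Q6.IsOrtho (Pi.single a 1) (Pi.single b 1) := by
  rw [QuadraticMap.isOrtho_def, hQ1, hQ1]
  simp [Q6, QuadraticMap.weightedSumSquares_apply, Pi.single_apply, add_mul, mul_add,
    Finset.sum_add_distrib, h, h.symm, Finset.sum_ite_eq']

@[simp] lemma gsq (a : Fin 6) : G6 a * G6 a = 1 := by
  rw [G6, CliffordAlgebra.ι_sq_scalar, hQ1, map_one]

@[simp] lemma gsq' (a : Fin 6) (x : CliffordAlgebra Q6) : G6 a * (G6 a * x) = x := by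
  rw [← mul_assoc, gsq, one_mul]

lemma gswap {a b : Fin 6} (h : a ≠ b) : G6 a * G6 b = -(G6 b * G6 a) :=
  CliffordAlgebra.ι_mul_ι_comm_of_isOrtho (hOrtho h)

lemma gswap' {a b : Fin 6} (h : a ≠ b) (x : CliffordAlgebra Q6) :
    G6 a * (G6 b * x) = -(G6 b * (G6 a * x)) :=
  CliffordAlgebra.ι_mul_ι_mul_of_isOrtho x (hOrtho h)
-- swap simp instances
@[simp] lemma g10 : G6 1 * G6 0 = -(G6 0 * G6 1) := gswap (by decide)
@[simp] lemma g10' (x : CliffordAlgebra Q6) : G6 1 * (G6 0 * x) = -(G6 0 * (G6 1 * x)) := gswap' (by decide) x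
@[simp] lemma g20 : G6 2 * G6 0 = -(G6 0 * G6 2) := gswap (by decide)
@[simp] lemma g20' (x : CliffordAlgebra Q6) : G6 2 * (G6 0 * x) = -(G6 0 * (G6 2 * x)) := gswap' (by decide) x
@[simp] lemma g21 : G6 2 * G6 1 = -(G6 1 * G6 2) := gswap (by decide)
@[simp] lemma g21' (x : CliffordAlgebra Q6) : G6 2 * (G6 1 * x) = -(G6 1 * (G6 2 * x)) := gswap' (by decide) x
@[simp] lemma g30 : G6 3 * G6 0 = -(G6 0 * G6 3) := gswap (by decide)
@[simp] lemma g30' (x : CliffordAlgebra Q6) : G6 3 * (G6 0 * x) = -(G6 0 * (G6 3 * x)) := gswap' (by decide) x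
@[simp] lemma g31 : G6 3 * G6 1 = -(G6 1 * G6 3) := gswap (by decide)
@[simp] lemma g31' (x : CliffordAlgebra Q6) : G6 3 * (G6 1 * x) = -(G6 1 * (G6 3 * x)) := gswap' (by decide) x
@[simp] lemma g32 : G6 3 * G6 2 = -(G6 2 * G6 3) := gswap (by decide)
@[simp] lemma g32' (x : CliffordAlgebra Q6) : G6 3 * (G6 2 * x) = -(G6 2 * (G6 3 * x)) := gswap' (by decide) x
@[simp] lemma g40 : G6 4 * G6 0 = -(G6 0 * G6 4) := gswap (by decide)
@[simp] lemma g40' (x : CliffordAlgebra Q6) : G6 4 * (G6 0 * x) = -(G6 0 * (G6 4 * x)) := gswap' (by decide) x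
@[simp] lemma g41 : G6 4 * G6 1 = -(G6 1 * G6 4) := gswap (by decide)
@[simp] lemma g41' (x : CliffordAlgebra Q6) : G6 4 * (G6 1 * x) = -(G6 1 * (G6 4 * x)) := gswap' (by decide) x
@[simp] lemma g42 : G6 4 * G6 2 = -(G6 2 * G6 4) := gswap (by decide)
@[simp] lemma g42' (x : CliffordAlgebra Q6) : G6 4 * (G6 2 * x) = -(G6 2 * (G6 4 * x)) := gswap' (by decide) x
@[simp] lemma g43 : G6 4 * G6 3 = -(G6 3 * G6 4) := gswap (by decide)
@[simp] lemma g43' (x : CliffordAlgebra Q6) : G6 4 * (G6 3 * x) = -(G6 3 * (G6 4 * x)) := gswap' (by decide) x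
@[simp] lemma g50 : G6 5 * G6 0 = -(G6 0 * G6 5) := gswap (by decide)
@[simp] lemma g50' (x : CliffordAlgebra Q6) : G6 5 * (G6 0 * x) = -(G6 0 * (G6 5 * x)) := gswap' (by decide) x
@[simp] lemma g51 : G6 5 * G6 1 = -(G6 1 * G6 5) := gswap (by decide)
@[simp] lemma g51' (x : CliffordAlgebra Q6) : G6 5 * (G6 1 * x) = -(G6 1 * (G6 5 * x)) := gswap' (by decide) x
@[simp] lemma g52 : G6 5 * G6 2 = -(G6 2 * G6 5) := gswap (by decide)
@[simp] lemma g52' (x : CliffordAlgebra Q6) : G6 5 * (G6 2 * x) = -(G6 2 * (G6 5 * x)) := gswap' (by decide) x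
@[simp] lemma g53 : G6 5 * G6 3 = -(G6 3 * G6 5) := gswap (by decide)
@[simp] lemma g53' (x : CliffordAlgebra Q6) : G6 5 * (G6 3 * x) = -(G6 3 * (G6 5 * x)) := gswap' (by decide) x
@[simp] lemma g54 : G6 5 * G6 4 = -(G6 4 * G6 5) := gswap (by decide)
@[simp] lemma g54' (x : CliffordAlgebra Q6) : G6 5 * (G6 4 * x) = -(G6 4 * (G6 5 * x)) := gswap' (by decide) x
@[simp] lemma id23 : G6 2 * (G6 3 * Omega6) = -(G6 0 * (G6 1 * Omega6)) := by
  simp [Omega6, mul_add, add_mul, mul_one, one_mul, mul_smul_comm, smul_mul_assoc,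
    mul_assoc, smul_add, smul_smul]
  try module

@[simp] lemma id45 : G6 4 * (G6 5 * Omega6) = -(G6 0 * (G6 1 * Omega6)) := by
  simp [Omega6, mul_add, add_mul, mul_one, one_mul, mul_smul_comm, smul_mul_assoc,
    mul_assoc, smul_add, smul_smul]
  try module

@[simp] lemma id13 : G6 1 * (G6 3 * Omega6) = G6 0 * (G6 2 * Omega6) := by
  simp [Omega6, mul_add, add_mul, mul_one, one_mul, mul_smul_comm, smul_mul_assoc,
    mul_assoc, smul_add, smul_smul]
  try module

@[simp] lemma id12 : G6 1 * (G6 2 * Omega6) = -(G6 0 * (G6 3 * Omega6)) := by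
  simp [Omega6, mul_add, add_mul, mul_one, one_mul, mul_smul_comm, smul_mul_assoc,
    mul_assoc, smul_add, smul_smul]
  try module

@[simp] lemma id15 : G6 1 * (G6 5 * Omega6) = G6 0 * (G6 4 * Omega6) := by
  simp [Omega6, mul_add, add_mul, mul_one, one_mul, mul_smul_comm, smul_mul_assoc,
    mul_assoc, smul_add, smul_smul]
  try module

@[simp] lemma id14 : G6 1 * (G6 4 * Omega6) = -(G6 0 * (G6 5 * Omega6)) := by
  simp [Omega6, mul_add, add_mul, mul_one, one_mul, mul_smul_comm, smul_mul_assoc,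
    mul_assoc, smul_add, smul_smul]
  try module

@[simp] lemma id35 : G6 3 * (G6 5 * Omega6) = -(G6 2 * (G6 4 * Omega6)) := by
  simp [Omega6, mul_add, add_mul, mul_one, one_mul, mul_smul_comm, smul_mul_assoc,
    mul_assoc, smul_add, smul_smul]
  try module

@[simp] lemma id34 : G6 3 * (G6 4 * Omega6) = G6 2 * (G6 5 * Omega6) := by
  simp [Omega6, mul_add, add_mul, mul_one, one_mul, mul_smul_comm, smul_mul_assoc,
    mul_assoc, smul_add, smul_smul]
  try module

lemma OmegaIdem : Omega6 * Omega6 = Omega6 := by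
  simp [Omega6, mul_add, add_mul, mul_one, one_mul, mul_smul_comm, smul_mul_assoc,
    mul_assoc, smul_add, smul_smul]
  module

lemma NF (F : Fin 6 → Fin 6 → ℝ) (hF : ∀ a b, F a b = -F b a) :
    X6 F * Omega6 =
      (2*(F 0 1 - F 2 3 - F 4 5)) • (G6 0 * (G6 1 * Omega6)) +
      (2*(F 0 2 + F 1 3)) • (G6 0 * (G6 2 * Omega6)) +
      (2*(F 0 3 - F 1 2)) • (G6 0 * (G6 3 * Omega6)) +
      (2*(F 0 4 + F 1 5)) • (G6 0 * (G6 4 * Omega6)) +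
      (2*(F 0 5 - F 1 4)) • (G6 0 * (G6 5 * Omega6)) +
      (2*(F 2 4 - F 3 5)) • (G6 2 * (G6 4 * Omega6)) +
      (2*(F 2 5 + F 3 4)) • (G6 2 * (G6 5 * Omega6)) := by
  have hd : ∀ a, F a a = 0 := fun a => by linarith [hF a a]
  simp only [X6, Fin.sum_univ_six, Finset.sum_add_distrib, add_mul, smul_mul_assoc]
  rw [hF 1 0, hF 2 0, hF 3 0, hF 4 0, hF 5 0, hF 2 1, hF 3 1, hF 4 1, hF 5 1,
      hF 3 2, hF 4 2, hF 5 2, hF 4 3, hF 5 3, hF 5 4]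
  simp [hd, mul_assoc]
  module
open Matrix Kronecker

noncomputable def s1 : Matrix (Fin 2) (Fin 2) ℂ := !![0, 1; 1, 0]
noncomputable def s2 : Matrix (Fin 2) (Fin 2) ℂ := !![0, -Complex.I; Complex.I, 0]
noncomputable def s3 : Matrix (Fin 2) (Fin 2) ℂ := !![1, 0; 0, -1]
noncomputable def o2 : Matrix (Fin 2) (Fin 2) ℂ := 1

lemma o2o2 : o2 * o2 = o2 := by simp [o2]

lemma s1s1 : s1 * s1 = o2 := by
  ext i j; fin_cases i <;> fin_cases j <;>
    simp [s1, o2, Matrix.mul_apply, Fin.sum_univ_two, Matrix.one_apply, Complex.I_mul_I]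

lemma s2s2 : s2 * s2 = o2 := by
  ext i j; fin_cases i <;> fin_cases j <;>
    simp [s2, o2, Matrix.mul_apply, Fin.sum_univ_two, Matrix.one_apply, Complex.I_mul_I]

lemma s3s3 : s3 * s3 = o2 := by
  ext i j; fin_cases i <;> fin_cases j <;>
    simp [s3, o2, Matrix.mul_apply, Fin.sum_univ_two, Matrix.one_apply, Complex.I_mul_I]

lemma s2s1 : s2 * s1 = -(s1 * s2) := by
  ext i j; fin_cases i <;> fin_cases j <;>
    simp [s1, s2, s3, Matrix.mul_apply, Fin.sum_univ_two]

lemma s3s1 : s3 * s1 = -(s1 * s3) := by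
  ext i j; fin_cases i <;> fin_cases j <;>
    simp [s1, s2, s3, Matrix.mul_apply, Fin.sum_univ_two]

lemma s3s2 : s3 * s2 = -(s2 * s3) := by
  ext i j; fin_cases i <;> fin_cases j <;>
    simp [s1, s2, s3, Matrix.mul_apply, Fin.sum_univ_two]

lemma s1o2 : s1 * o2 = s1 := by simp [o2]
lemma o2s1 : o2 * s1 = s1 := by simp [o2]
lemma s2o2 : s2 * o2 = s2 := by simp [o2]
lemma o2s2 : o2 * s2 = s2 := by simp [o2]
lemma s3o2 : s3 * o2 = s3 := by simp [o2]
lemma o2s3 : o2 * s3 = s3 := by simp [o2]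

abbrev Idx : Type := (Fin 2 × Fin 2) × Fin 2
abbrev Mat8 : Type := Matrix Idx Idx ℂ

lemma kron_negR {m n : Type*} (A : Matrix m m ℂ) (B : Matrix n n ℂ) :
    A ⊗ₖ (-B) = -(A ⊗ₖ B) := by
  ext ⟨i,j⟩ ⟨k,l⟩; simp [Matrix.kronecker_apply]

lemma kron_negL {m n : Type*} (A : Matrix m m ℂ) (B : Matrix n n ℂ) :
    (-A) ⊗ₖ B = -(A ⊗ₖ B) := by
  ext ⟨i,j⟩ ⟨k,l⟩; simp [Matrix.kronecker_apply]

noncomputable def m0 : Mat8 := (s1 ⊗ₖ o2) ⊗ₖ o2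
noncomputable def m1 : Mat8 := (s2 ⊗ₖ o2) ⊗ₖ o2
noncomputable def m2 : Mat8 := (s3 ⊗ₖ s1) ⊗ₖ o2
noncomputable def m3 : Mat8 := (s3 ⊗ₖ s2) ⊗ₖ o2
noncomputable def m4 : Mat8 := (s3 ⊗ₖ s3) ⊗ₖ s1
noncomputable def m5 : Mat8 := (s3 ⊗ₖ s3) ⊗ₖ s2

lemma oneKron : (1 : Mat8) = (o2 ⊗ₖ o2) ⊗ₖ o2 := by
  rw [o2, Matrix.one_kronecker_one, Matrix.one_kronecker_one]

lemma msq0 : m0 * m0 = 1 := by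
  rw [m0, ← Matrix.mul_kronecker_mul, ← Matrix.mul_kronecker_mul]
  simp [s1s1, s2s2, s3s3, s2s1, s3s1, s3s2, o2o2, s1o2, s2o2, s3o2, o2s1, o2s2, o2s3, kron_negL, kron_negR, oneKron]

lemma msq1 : m1 * m1 = 1 := by
  rw [m1, ← Matrix.mul_kronecker_mul, ← Matrix.mul_kronecker_mul]
  simp [s1s1, s2s2, s3s3, s2s1, s3s1, s3s2, o2o2, s1o2, s2o2, s3o2, o2s1, o2s2, o2s3, kron_negL, kron_negR, oneKron]

lemma msq2 : m2 * m2 = 1 := by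
  rw [m2, ← Matrix.mul_kronecker_mul, ← Matrix.mul_kronecker_mul]
  simp [s1s1, s2s2, s3s3, s2s1, s3s1, s3s2, o2o2, s1o2, s2o2, s3o2, o2s1, o2s2, o2s3, kron_negL, kron_negR, oneKron]

lemma msq3 : m3 * m3 = 1 := by
  rw [m3, ← Matrix.mul_kronecker_mul, ← Matrix.mul_kronecker_mul]
  simp [s1s1, s2s2, s3s3, s2s1, s3s1, s3s2, o2o2, s1o2, s2o2, s3o2, o2s1, o2s2, o2s3, kron_negL, kron_negR, oneKron]

lemma msq4 : m4 * m4 = 1 := by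
  rw [m4, ← Matrix.mul_kronecker_mul, ← Matrix.mul_kronecker_mul]
  simp [s1s1, s2s2, s3s3, s2s1, s3s1, s3s2, o2o2, s1o2, s2o2, s3o2, o2s1, o2s2, o2s3, kron_negL, kron_negR, oneKron]

lemma msq5 : m5 * m5 = 1 := by
  rw [m5, ← Matrix.mul_kronecker_mul, ← Matrix.mul_kronecker_mul]
  simp [s1s1, s2s2, s3s3, s2s1, s3s1, s3s2, o2o2, s1o2, s2o2, s3o2, o2s1, o2s2, o2s3, kron_negL, kron_negR, oneKron]

lemma mm10 : m1 * m0 = -(m0 * m1) := by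
  rw [m0, m1, ← Matrix.mul_kronecker_mul, ← Matrix.mul_kronecker_mul,
      ← Matrix.mul_kronecker_mul, ← Matrix.mul_kronecker_mul]
  simp [s1s1, s2s2, s3s3, s2s1, s3s1, s3s2, o2o2, s1o2, s2o2, s3o2, o2s1, o2s2, o2s3, kron_negL, kron_negR, oneKron]

lemma mm20 : m2 * m0 = -(m0 * m2) := by
  rw [m0, m2, ← Matrix.mul_kronecker_mul, ← Matrix.mul_kronecker_mul,
      ← Matrix.mul_kronecker_mul, ← Matrix.mul_kronecker_mul]
  simp [s1s1, s2s2, s3s3, s2s1, s3s1, s3s2, o2o2, s1o2, s2o2, s3o2, o2s1, o2s2, o2s3, kron_negL, kron_negR, oneKron]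

lemma mm21 : m2 * m1 = -(m1 * m2) := by
  rw [m1, m2, ← Matrix.mul_kronecker_mul, ← Matrix.mul_kronecker_mul,
      ← Matrix.mul_kronecker_mul, ← Matrix.mul_kronecker_mul]
  simp [s1s1, s2s2, s3s3, s2s1, s3s1, s3s2, o2o2, s1o2, s2o2, s3o2, o2s1, o2s2, o2s3, kron_negL, kron_negR, oneKron]

lemma mm30 : m3 * m0 = -(m0 * m3) := by
  rw [m0, m3, ← Matrix.mul_kronecker_mul, ← Matrix.mul_kronecker_mul,
      ← Matrix.mul_kronecker_mul, ← Matrix.mul_kronecker_mul]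
  simp [s1s1, s2s2, s3s3, s2s1, s3s1, s3s2, o2o2, s1o2, s2o2, s3o2, o2s1, o2s2, o2s3, kron_negL, kron_negR, oneKron]

lemma mm31 : m3 * m1 = -(m1 * m3) := by
  rw [m1, m3, ← Matrix.mul_kronecker_mul, ← Matrix.mul_kronecker_mul,
      ← Matrix.mul_kronecker_mul, ← Matrix.mul_kronecker_mul]
  simp [s1s1, s2s2, s3s3, s2s1, s3s1, s3s2, o2o2, s1o2, s2o2, s3o2, o2s1, o2s2, o2s3, kron_negL, kron_negR, oneKron]

lemma mm32 : m3 * m2 = -(m2 * m3) := by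
  rw [m2, m3, ← Matrix.mul_kronecker_mul, ← Matrix.mul_kronecker_mul,
      ← Matrix.mul_kronecker_mul, ← Matrix.mul_kronecker_mul]
  simp [s1s1, s2s2, s3s3, s2s1, s3s1, s3s2, o2o2, s1o2, s2o2, s3o2, o2s1, o2s2, o2s3, kron_negL, kron_negR, oneKron]

lemma mm40 : m4 * m0 = -(m0 * m4) := by
  rw [m0, m4, ← Matrix.mul_kronecker_mul, ← Matrix.mul_kronecker_mul,
      ← Matrix.mul_kronecker_mul, ← Matrix.mul_kronecker_mul]
  simp [s1s1, s2s2, s3s3, s2s1, s3s1, s3s2, o2o2, s1o2, s2o2, s3o2, o2s1, o2s2, o2s3, kron_negL, kron_negR, oneKron]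

lemma mm41 : m4 * m1 = -(m1 * m4) := by
  rw [m1, m4, ← Matrix.mul_kronecker_mul, ← Matrix.mul_kronecker_mul,
      ← Matrix.mul_kronecker_mul, ← Matrix.mul_kronecker_mul]
  simp [s1s1, s2s2, s3s3, s2s1, s3s1, s3s2, o2o2, s1o2, s2o2, s3o2, o2s1, o2s2, o2s3, kron_negL, kron_negR, oneKron]

lemma mm42 : m4 * m2 = -(m2 * m4) := by
  rw [m2, m4, ← Matrix.mul_kronecker_mul, ← Matrix.mul_kronecker_mul,
      ← Matrix.mul_kronecker_mul, ← Matrix.mul_kronecker_mul]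
  simp [s1s1, s2s2, s3s3, s2s1, s3s1, s3s2, o2o2, s1o2, s2o2, s3o2, o2s1, o2s2, o2s3, kron_negL, kron_negR, oneKron]

lemma mm43 : m4 * m3 = -(m3 * m4) := by
  rw [m3, m4, ← Matrix.mul_kronecker_mul, ← Matrix.mul_kronecker_mul,
      ← Matrix.mul_kronecker_mul, ← Matrix.mul_kronecker_mul]
  simp [s1s1, s2s2, s3s3, s2s1, s3s1, s3s2, o2o2, s1o2, s2o2, s3o2, o2s1, o2s2, o2s3, kron_negL, kron_negR, oneKron]

lemma mm50 : m5 * m0 = -(m0 * m5) := by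
  rw [m0, m5, ← Matrix.mul_kronecker_mul, ← Matrix.mul_kronecker_mul,
      ← Matrix.mul_kronecker_mul, ← Matrix.mul_kronecker_mul]
  simp [s1s1, s2s2, s3s3, s2s1, s3s1, s3s2, o2o2, s1o2, s2o2, s3o2, o2s1, o2s2, o2s3, kron_negL, kron_negR, oneKron]

lemma mm51 : m5 * m1 = -(m1 * m5) := by
  rw [m1, m5, ← Matrix.mul_kronecker_mul, ← Matrix.mul_kronecker_mul,
      ← Matrix.mul_kronecker_mul, ← Matrix.mul_kronecker_mul]
  simp [s1s1, s2s2, s3s3, s2s1, s3s1, s3s2, o2o2, s1o2, s2o2, s3o2, o2s1, o2s2, o2s3, kron_negL, kron_negR, oneKron]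

lemma mm52 : m5 * m2 = -(m2 * m5) := by
  rw [m2, m5, ← Matrix.mul_kronecker_mul, ← Matrix.mul_kronecker_mul,
      ← Matrix.mul_kronecker_mul, ← Matrix.mul_kronecker_mul]
  simp [s1s1, s2s2, s3s3, s2s1, s3s1, s3s2, o2o2, s1o2, s2o2, s3o2, o2s1, o2s2, o2s3, kron_negL, kron_negR, oneKron]

lemma mm53 : m5 * m3 = -(m3 * m5) := by
  rw [m3, m5, ← Matrix.mul_kronecker_mul, ← Matrix.mul_kronecker_mul,
      ← Matrix.mul_kronecker_mul, ← Matrix.mul_kronecker_mul]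
  simp [s1s1, s2s2, s3s3, s2s1, s3s1, s3s2, o2o2, s1o2, s2o2, s3o2, o2s1, o2s2, o2s3, kron_negL, kron_negR, oneKron]

lemma mm54 : m5 * m4 = -(m4 * m5) := by
  rw [m4, m5, ← Matrix.mul_kronecker_mul, ← Matrix.mul_kronecker_mul,
      ← Matrix.mul_kronecker_mul, ← Matrix.mul_kronecker_mul]
  simp [s1s1, s2s2, s3s3, s2s1, s3s1, s3s2, o2o2, s1o2, s2o2, s3o2, o2s1, o2s2, o2s3, kron_negL, kron_negR, oneKron]

noncomputable def mg : Fin 6 → Mat8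
  | 0 => m0 | 1 => m1 | 2 => m2 | 3 => m3 | 4 => m4 | 5 => m5

noncomputable def fmap : (Fin 6 → ℝ) →ₗ[ℝ] Mat8 where
  toFun v := ∑ a, v a • mg a
  map_add' x y := by simp [add_smul, Finset.sum_add_distrib]
  map_smul' r x := by simp [Finset.smul_sum, smul_smul]

lemma fsq (v : Fin 6 → ℝ) : fmap v * fmap v = algebraMap ℝ Mat8 (Q6 v) := by
  have hq : Q6 v = v 0 * v 0 + v 1 * v 1 + v 2 * v 2 + v 3 * v 3 + v 4 * v 4 + v 5 * v 5 := by
    simp [Q6, QuadraticMap.weightedSumSquares_apply, Fin.sum_univ_six]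
    try ring
  rw [hq]
  simp only [fmap, LinearMap.coe_mk, AddHom.coe_mk, Fin.sum_univ_six, mg]
  simp only [_root_.map_add, Algebra.algebraMap_eq_smul_one]
  simp only [add_mul, mul_add, smul_mul_assoc, mul_smul_comm, smul_smul,
    msq0, msq1, msq2, msq3, msq4, msq5,
    mm10, mm20, mm30, mm40, mm50, mm21, mm31, mm41, mm51, mm32, mm42, mm52, mm43, mm53, mm54]
  try module

noncomputable def phi : CliffordAlgebra Q6 →ₐ[ℝ] Mat8 :=
  CliffordAlgebra.lift Q6 ⟨fmap, fsq⟩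

lemma phiG (a : Fin 6) : phi (G6 a) = mg a := by
  rw [phi, G6, CliffordAlgebra.lift_ι_apply]
  simp [fmap, Fin.sum_univ_six, Pi.single_apply]
  fin_cases a <;> simp [mg]

noncomputable def Phim : Mat8 :=
  (1 / 4 : ℝ) • ((1 + m0 * m1 * m2 * m3) * (1 + m0 * m1 * m4 * m5))

lemma phiOmega : phi Omega6 = Phim := by
  rw [Omega6, Phim]
  simp only [_root_.map_smul, _root_.map_mul, _root_.map_add, _root_.map_one, phiG]
  norm_num [mg]

lemma phiT (a b : Fin 6) : phi (G6 a * (G6 b * Omega6)) = mg a * (mg b * Phim) := by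
  simp only [_root_.map_mul, phiG, phiOmega]
lemma tE00 : (m0 * (m1 * Phim)) ((0,1),1) ((0,1),1) = Complex.I := by
  rw [Phim]
  simp only [mul_add, add_mul, mul_one, one_mul, mul_smul_comm, smul_smul, ← mul_assoc]
  simp only [m0, m1, m2, m3, m4, m5, ← Matrix.mul_kronecker_mul]
  simp only [s1s1, s2s2, s3s3, s2s1, s3s1, s3s2, o2o2, s1o2, s2o2, s3o2, o2s1, o2s2, o2s3,
    kron_negL, kron_negR]
  simp [Matrix.smul_apply, Matrix.add_apply, Matrix.kronecker_apply, s1, s2, s3, o2,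
    Matrix.one_apply]
  try norm_num
  try ring

lemma tE01 : (m0 * (m1 * Phim)) ((0,1),0) ((1,0),0) = 0 := by
  rw [Phim]
  simp only [mul_add, add_mul, mul_one, one_mul, mul_smul_comm, smul_smul, ← mul_assoc]
  simp only [m0, m1, m2, m3, m4, m5, ← Matrix.mul_kronecker_mul]
  simp only [s1s1, s2s2, s3s3, s2s1, s3s1, s3s2, o2o2, s1o2, s2o2, s3o2, o2s1, o2s2, o2s3,
    kron_negL, kron_negR]
  simp [Matrix.smul_apply, Matrix.add_apply, Matrix.kronecker_apply, s1, s2, s3, o2,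
    Matrix.one_apply]
  try norm_num
  try ring

lemma tE02 : (m0 * (m1 * Phim)) ((0,0),1) ((1,0),0) = 0 := by
  rw [Phim]
  simp only [mul_add, add_mul, mul_one, one_mul, mul_smul_comm, smul_smul, ← mul_assoc]
  simp only [m0, m1, m2, m3, m4, m5, ← Matrix.mul_kronecker_mul]
  simp only [s1s1, s2s2, s3s3, s2s1, s3s1, s3s2, o2o2, s1o2, s2o2, s3o2, o2s1, o2s2, o2s3,
    kron_negL, kron_negR]
  simp [Matrix.smul_apply, Matrix.add_apply, Matrix.kronecker_apply, s1, s2, s3, o2,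
    Matrix.one_apply]
  try norm_num
  try ring

lemma tE03 : (m0 * (m1 * Phim)) ((0,0),0) ((0,1),1) = 0 := by
  rw [Phim]
  simp only [mul_add, add_mul, mul_one, one_mul, mul_smul_comm, smul_smul, ← mul_assoc]
  simp only [m0, m1, m2, m3, m4, m5, ← Matrix.mul_kronecker_mul]
  simp only [s1s1, s2s2, s3s3, s2s1, s3s1, s3s2, o2o2, s1o2, s2o2, s3o2, o2s1, o2s2, o2s3,
    kron_negL, kron_negR]
  simp [Matrix.smul_apply, Matrix.add_apply, Matrix.kronecker_apply, s1, s2, s3, o2,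
    Matrix.one_apply]
  try norm_num
  try ring

lemma tE10 : (m0 * (m2 * Phim)) ((0,1),1) ((0,1),1) = 0 := by
  rw [Phim]
  simp only [mul_add, add_mul, mul_one, one_mul, mul_smul_comm, smul_smul, ← mul_assoc]
  simp only [m0, m1, m2, m3, m4, m5, ← Matrix.mul_kronecker_mul]
  simp only [s1s1, s2s2, s3s3, s2s1, s3s1, s3s2, o2o2, s1o2, s2o2, s3o2, o2s1, o2s2, o2s3,
    kron_negL, kron_negR]
  simp [Matrix.smul_apply, Matrix.add_apply, Matrix.kronecker_apply, s1, s2, s3, o2,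
    Matrix.one_apply]
  try norm_num
  try ring

lemma tE11 : (m0 * (m2 * Phim)) ((0,1),0) ((1,0),0) = -1 := by
  rw [Phim]
  simp only [mul_add, add_mul, mul_one, one_mul, mul_smul_comm, smul_smul, ← mul_assoc]
  simp only [m0, m1, m2, m3, m4, m5, ← Matrix.mul_kronecker_mul]
  simp only [s1s1, s2s2, s3s3, s2s1, s3s1, s3s2, o2o2, s1o2, s2o2, s3o2, o2s1, o2s2, o2s3,
    kron_negL, kron_negR]
  simp [Matrix.smul_apply, Matrix.add_apply, Matrix.kronecker_apply, s1, s2, s3, o2,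
    Matrix.one_apply]
  try norm_num
  try ring

lemma tE12 : (m0 * (m2 * Phim)) ((0,0),1) ((1,0),0) = 0 := by
  rw [Phim]
  simp only [mul_add, add_mul, mul_one, one_mul, mul_smul_comm, smul_smul, ← mul_assoc]
  simp only [m0, m1, m2, m3, m4, m5, ← Matrix.mul_kronecker_mul]
  simp only [s1s1, s2s2, s3s3, s2s1, s3s1, s3s2, o2o2, s1o2, s2o2, s3o2, o2s1, o2s2, o2s3,
    kron_negL, kron_negR]
  simp [Matrix.smul_apply, Matrix.add_apply, Matrix.kronecker_apply, s1, s2, s3, o2,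
    Matrix.one_apply]
  try norm_num
  try ring

lemma tE13 : (m0 * (m2 * Phim)) ((0,0),0) ((0,1),1) = 0 := by
  rw [Phim]
  simp only [mul_add, add_mul, mul_one, one_mul, mul_smul_comm, smul_smul, ← mul_assoc]
  simp only [m0, m1, m2, m3, m4, m5, ← Matrix.mul_kronecker_mul]
  simp only [s1s1, s2s2, s3s3, s2s1, s3s1, s3s2, o2o2, s1o2, s2o2, s3o2, o2s1, o2s2, o2s3,
    kron_negL, kron_negR]
  simp [Matrix.smul_apply, Matrix.add_apply, Matrix.kronecker_apply, s1, s2, s3, o2,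
    Matrix.one_apply]
  try norm_num
  try ring

lemma tE20 : (m0 * (m3 * Phim)) ((0,1),1) ((0,1),1) = 0 := by
  rw [Phim]
  simp only [mul_add, add_mul, mul_one, one_mul, mul_smul_comm, smul_smul, ← mul_assoc]
  simp only [m0, m1, m2, m3, m4, m5, ← Matrix.mul_kronecker_mul]
  simp only [s1s1, s2s2, s3s3, s2s1, s3s1, s3s2, o2o2, s1o2, s2o2, s3o2, o2s1, o2s2, o2s3,
    kron_negL, kron_negR]
  simp [Matrix.smul_apply, Matrix.add_apply, Matrix.kronecker_apply, s1, s2, s3, o2,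
    Matrix.one_apply]
  try norm_num
  try ring

lemma tE21 : (m0 * (m3 * Phim)) ((0,1),0) ((1,0),0) = -Complex.I := by
  rw [Phim]
  simp only [mul_add, add_mul, mul_one, one_mul, mul_smul_comm, smul_smul, ← mul_assoc]
  simp only [m0, m1, m2, m3, m4, m5, ← Matrix.mul_kronecker_mul]
  simp only [s1s1, s2s2, s3s3, s2s1, s3s1, s3s2, o2o2, s1o2, s2o2, s3o2, o2s1, o2s2, o2s3,
    kron_negL, kron_negR]
  simp [Matrix.smul_apply, Matrix.add_apply, Matrix.kronecker_apply, s1, s2, s3, o2,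
    Matrix.one_apply]
  try norm_num
  try ring

lemma tE22 : (m0 * (m3 * Phim)) ((0,0),1) ((1,0),0) = 0 := by
  rw [Phim]
  simp only [mul_add, add_mul, mul_one, one_mul, mul_smul_comm, smul_smul, ← mul_assoc]
  simp only [m0, m1, m2, m3, m4, m5, ← Matrix.mul_kronecker_mul]
  simp only [s1s1, s2s2, s3s3, s2s1, s3s1, s3s2, o2o2, s1o2, s2o2, s3o2, o2s1, o2s2, o2s3,
    kron_negL, kron_negR]
  simp [Matrix.smul_apply, Matrix.add_apply, Matrix.kronecker_apply, s1, s2, s3, o2,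
    Matrix.one_apply]
  try norm_num
  try ring

lemma tE23 : (m0 * (m3 * Phim)) ((0,0),0) ((0,1),1) = 0 := by
  rw [Phim]
  simp only [mul_add, add_mul, mul_one, one_mul, mul_smul_comm, smul_smul, ← mul_assoc]
  simp only [m0, m1, m2, m3, m4, m5, ← Matrix.mul_kronecker_mul]
  simp only [s1s1, s2s2, s3s3, s2s1, s3s1, s3s2, o2o2, s1o2, s2o2, s3o2, o2s1, o2s2, o2s3,
    kron_negL, kron_negR]
  simp [Matrix.smul_apply, Matrix.add_apply, Matrix.kronecker_apply, s1, s2, s3, o2,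
    Matrix.one_apply]
  try norm_num
  try ring

lemma tE30 : (m0 * (m4 * Phim)) ((0,1),1) ((0,1),1) = 0 := by
  rw [Phim]
  simp only [mul_add, add_mul, mul_one, one_mul, mul_smul_comm, smul_smul, ← mul_assoc]
  simp only [m0, m1, m2, m3, m4, m5, ← Matrix.mul_kronecker_mul]
  simp only [s1s1, s2s2, s3s3, s2s1, s3s1, s3s2, o2o2, s1o2, s2o2, s3o2, o2s1, o2s2, o2s3,
    kron_negL, kron_negR]
  simp [Matrix.smul_apply, Matrix.add_apply, Matrix.kronecker_apply, s1, s2, s3, o2,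
    Matrix.one_apply]
  try norm_num
  try ring

lemma tE31 : (m0 * (m4 * Phim)) ((0,1),0) ((1,0),0) = 0 := by
  rw [Phim]
  simp only [mul_add, add_mul, mul_one, one_mul, mul_smul_comm, smul_smul, ← mul_assoc]
  simp only [m0, m1, m2, m3, m4, m5, ← Matrix.mul_kronecker_mul]
  simp only [s1s1, s2s2, s3s3, s2s1, s3s1, s3s2, o2o2, s1o2, s2o2, s3o2, o2s1, o2s2, o2s3,
    kron_negL, kron_negR]
  simp [Matrix.smul_apply, Matrix.add_apply, Matrix.kronecker_apply, s1, s2, s3, o2,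
    Matrix.one_apply]
  try norm_num
  try ring

lemma tE32 : (m0 * (m4 * Phim)) ((0,0),1) ((1,0),0) = -1 := by
  rw [Phim]
  simp only [mul_add, add_mul, mul_one, one_mul, mul_smul_comm, smul_smul, ← mul_assoc]
  simp only [m0, m1, m2, m3, m4, m5, ← Matrix.mul_kronecker_mul]
  simp only [s1s1, s2s2, s3s3, s2s1, s3s1, s3s2, o2o2, s1o2, s2o2, s3o2, o2s1, o2s2, o2s3,
    kron_negL, kron_negR]
  simp [Matrix.smul_apply, Matrix.add_apply, Matrix.kronecker_apply, s1, s2, s3, o2,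
    Matrix.one_apply]
  try norm_num
  try ring

lemma tE33 : (m0 * (m4 * Phim)) ((0,0),0) ((0,1),1) = 0 := by
  rw [Phim]
  simp only [mul_add, add_mul, mul_one, one_mul, mul_smul_comm, smul_smul, ← mul_assoc]
  simp only [m0, m1, m2, m3, m4, m5, ← Matrix.mul_kronecker_mul]
  simp only [s1s1, s2s2, s3s3, s2s1, s3s1, s3s2, o2o2, s1o2, s2o2, s3o2, o2s1, o2s2, o2s3,
    kron_negL, kron_negR]
  simp [Matrix.smul_apply, Matrix.add_apply, Matrix.kronecker_apply, s1, s2, s3, o2,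
    Matrix.one_apply]
  try norm_num
  try ring

lemma tE40 : (m0 * (m5 * Phim)) ((0,1),1) ((0,1),1) = 0 := by
  rw [Phim]
  simp only [mul_add, add_mul, mul_one, one_mul, mul_smul_comm, smul_smul, ← mul_assoc]
  simp only [m0, m1, m2, m3, m4, m5, ← Matrix.mul_kronecker_mul]
  simp only [s1s1, s2s2, s3s3, s2s1, s3s1, s3s2, o2o2, s1o2, s2o2, s3o2, o2s1, o2s2, o2s3,
    kron_negL, kron_negR]
  simp [Matrix.smul_apply, Matrix.add_apply, Matrix.kronecker_apply, s1, s2, s3, o2,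
    Matrix.one_apply]
  try norm_num
  try ring

lemma tE41 : (m0 * (m5 * Phim)) ((0,1),0) ((1,0),0) = 0 := by
  rw [Phim]
  simp only [mul_add, add_mul, mul_one, one_mul, mul_smul_comm, smul_smul, ← mul_assoc]
  simp only [m0, m1, m2, m3, m4, m5, ← Matrix.mul_kronecker_mul]
  simp only [s1s1, s2s2, s3s3, s2s1, s3s1, s3s2, o2o2, s1o2, s2o2, s3o2, o2s1, o2s2, o2s3,
    kron_negL, kron_negR]
  simp [Matrix.smul_apply, Matrix.add_apply, Matrix.kronecker_apply, s1, s2, s3, o2,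
    Matrix.one_apply]
  try norm_num
  try ring

lemma tE42 : (m0 * (m5 * Phim)) ((0,0),1) ((1,0),0) = -Complex.I := by
  rw [Phim]
  simp only [mul_add, add_mul, mul_one, one_mul, mul_smul_comm, smul_smul, ← mul_assoc]
  simp only [m0, m1, m2, m3, m4, m5, ← Matrix.mul_kronecker_mul]
  simp only [s1s1, s2s2, s3s3, s2s1, s3s1, s3s2, o2o2, s1o2, s2o2, s3o2, o2s1, o2s2, o2s3,
    kron_negL, kron_negR]
  simp [Matrix.smul_apply, Matrix.add_apply, Matrix.kronecker_apply, s1, s2, s3, o2,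
    Matrix.one_apply]
  try norm_num
  try ring

lemma tE43 : (m0 * (m5 * Phim)) ((0,0),0) ((0,1),1) = 0 := by
  rw [Phim]
  simp only [mul_add, add_mul, mul_one, one_mul, mul_smul_comm, smul_smul, ← mul_assoc]
  simp only [m0, m1, m2, m3, m4, m5, ← Matrix.mul_kronecker_mul]
  simp only [s1s1, s2s2, s3s3, s2s1, s3s1, s3s2, o2o2, s1o2, s2o2, s3o2, o2s1, o2s2, o2s3,
    kron_negL, kron_negR]
  simp [Matrix.smul_apply, Matrix.add_apply, Matrix.kronecker_apply, s1, s2, s3, o2,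
    Matrix.one_apply]
  try norm_num
  try ring

lemma tE50 : (m2 * (m4 * Phim)) ((0,1),1) ((0,1),1) = 0 := by
  rw [Phim]
  simp only [mul_add, add_mul, mul_one, one_mul, mul_smul_comm, smul_smul, ← mul_assoc]
  simp only [m0, m1, m2, m3, m4, m5, ← Matrix.mul_kronecker_mul]
  simp only [s1s1, s2s2, s3s3, s2s1, s3s1, s3s2, o2o2, s1o2, s2o2, s3o2, o2s1, o2s2, o2s3,
    kron_negL, kron_negR]
  simp [Matrix.smul_apply, Matrix.add_apply, Matrix.kronecker_apply, s1, s2, s3, o2,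
    Matrix.one_apply]
  try norm_num
  try ring

lemma tE51 : (m2 * (m4 * Phim)) ((0,1),0) ((1,0),0) = 0 := by
  rw [Phim]
  simp only [mul_add, add_mul, mul_one, one_mul, mul_smul_comm, smul_smul, ← mul_assoc]
  simp only [m0, m1, m2, m3, m4, m5, ← Matrix.mul_kronecker_mul]
  simp only [s1s1, s2s2, s3s3, s2s1, s3s1, s3s2, o2o2, s1o2, s2o2, s3o2, o2s1, o2s2, o2s3,
    kron_negL, kron_negR]
  simp [Matrix.smul_apply, Matrix.add_apply, Matrix.kronecker_apply, s1, s2, s3, o2,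
    Matrix.one_apply]
  try norm_num
  try ring

lemma tE52 : (m2 * (m4 * Phim)) ((0,0),1) ((1,0),0) = 0 := by
  rw [Phim]
  simp only [mul_add, add_mul, mul_one, one_mul, mul_smul_comm, smul_smul, ← mul_assoc]
  simp only [m0, m1, m2, m3, m4, m5, ← Matrix.mul_kronecker_mul]
  simp only [s1s1, s2s2, s3s3, s2s1, s3s1, s3s2, o2o2, s1o2, s2o2, s3o2, o2s1, o2s2, o2s3,
    kron_negL, kron_negR]
  simp [Matrix.smul_apply, Matrix.add_apply, Matrix.kronecker_apply, s1, s2, s3, o2,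
    Matrix.one_apply]
  try norm_num
  try ring

lemma tE53 : (m2 * (m4 * Phim)) ((0,0),0) ((0,1),1) = -1 := by
  rw [Phim]
  simp only [mul_add, add_mul, mul_one, one_mul, mul_smul_comm, smul_smul, ← mul_assoc]
  simp only [m0, m1, m2, m3, m4, m5, ← Matrix.mul_kronecker_mul]
  simp only [s1s1, s2s2, s3s3, s2s1, s3s1, s3s2, o2o2, s1o2, s2o2, s3o2, o2s1, o2s2, o2s3,
    kron_negL, kron_negR]
  simp [Matrix.smul_apply, Matrix.add_apply, Matrix.kronecker_apply, s1, s2, s3, o2,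
    Matrix.one_apply]
  try norm_num
  try ring

lemma tE60 : (m2 * (m5 * Phim)) ((0,1),1) ((0,1),1) = 0 := by
  rw [Phim]
  simp only [mul_add, add_mul, mul_one, one_mul, mul_smul_comm, smul_smul, ← mul_assoc]
  simp only [m0, m1, m2, m3, m4, m5, ← Matrix.mul_kronecker_mul]
  simp only [s1s1, s2s2, s3s3, s2s1, s3s1, s3s2, o2o2, s1o2, s2o2, s3o2, o2s1, o2s2, o2s3,
    kron_negL, kron_negR]
  simp [Matrix.smul_apply, Matrix.add_apply, Matrix.kronecker_apply, s1, s2, s3, o2,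
    Matrix.one_apply]
  try norm_num
  try ring

lemma tE61 : (m2 * (m5 * Phim)) ((0,1),0) ((1,0),0) = 0 := by
  rw [Phim]
  simp only [mul_add, add_mul, mul_one, one_mul, mul_smul_comm, smul_smul, ← mul_assoc]
  simp only [m0, m1, m2, m3, m4, m5, ← Matrix.mul_kronecker_mul]
  simp only [s1s1, s2s2, s3s3, s2s1, s3s1, s3s2, o2o2, s1o2, s2o2, s3o2, o2s1, o2s2, o2s3,
    kron_negL, kron_negR]
  simp [Matrix.smul_apply, Matrix.add_apply, Matrix.kronecker_apply, s1, s2, s3, o2,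
    Matrix.one_apply]
  try norm_num
  try ring

lemma tE62 : (m2 * (m5 * Phim)) ((0,0),1) ((1,0),0) = 0 := by
  rw [Phim]
  simp only [mul_add, add_mul, mul_one, one_mul, mul_smul_comm, smul_smul, ← mul_assoc]
  simp only [m0, m1, m2, m3, m4, m5, ← Matrix.mul_kronecker_mul]
  simp only [s1s1, s2s2, s3s3, s2s1, s3s1, s3s2, o2o2, s1o2, s2o2, s3o2, o2s1, o2s2, o2s3,
    kron_negL, kron_negR]
  simp [Matrix.smul_apply, Matrix.add_apply, Matrix.kronecker_apply, s1, s2, s3, o2,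
    Matrix.one_apply]
  try norm_num
  try ring

lemma tE63 : (m2 * (m5 * Phim)) ((0,0),0) ((0,1),1) = Complex.I := by
  rw [Phim]
  simp only [mul_add, add_mul, mul_one, one_mul, mul_smul_comm, smul_smul, ← mul_assoc]
  simp only [m0, m1, m2, m3, m4, m5, ← Matrix.mul_kronecker_mul]
  simp only [s1s1, s2s2, s3s3, s2s1, s3s1, s3s2, o2o2, s1o2, s2o2, s3o2, o2s1, o2s2, o2s3,
    kron_negL, kron_negR]
  simp [Matrix.smul_apply, Matrix.add_apply, Matrix.kronecker_apply, s1, s2, s3, o2,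
    Matrix.one_apply]
  try norm_num
  try ring

end Aux

/-- BPS equations in six Euclidean dimensions (`ν = 1/4`):
`Ω = ¼(1 + Γ₁₂₃₄)(1 + Γ₁₂₅₆)` is an idempotent, and for antisymmetric `F` one
has `X_F·Ω = 0` iff the seven equations `F₁₂+F₄₃+F₆₅ = 0`, `F₁₃+F₂₄ = 0`,
`F₁₄+F₃₂ = 0`, `F₁₅+F₂₆ = 0`, `F₁₆+F₅₂ = 0`, `F₃₅+F₆₄ = 0`, `F₃₆+F₄₅ = 0` hold
(indices shifted down by one since `Fin 6` starts at `0`). -/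
theorem bps_six_dimensions :
    Omega6 * Omega6 = Omega6 ∧
    ∀ F : Fin 6 → Fin 6 → ℝ, (∀ a b, F a b = -F b a) →
      (X6 F * Omega6 = 0 ↔
        (F 0 1 + F 3 2 + F 5 4 = 0 ∧
         F 0 2 + F 1 3 = 0 ∧
         F 0 3 + F 2 1 = 0 ∧
         F 0 4 + F 1 5 = 0 ∧
         F 0 5 + F 4 1 = 0 ∧
         F 2 4 + F 5 3 = 0 ∧
         F 2 5 + F 3 4 = 0)) := by
  refine ⟨OmegaIdem, fun F hF => ⟨fun h => ?_, fun ⟨h1, h2, h3, h4, h5, h6, h7⟩ => ?_⟩⟩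
  · have hnf := (NF F hF).symm.trans h
    have hphi := congrArg phi hnf
    simp only [_root_.map_add, _root_.map_smul, phiT, _root_.map_zero, mg] at hphi
    have e1 := congrArg (fun M => M ((0,1),1) ((0,1),1)) hphi
    have e2 := congrArg (fun M => M ((0,1),0) ((1,0),0)) hphi
    have e3 := congrArg (fun M => M ((0,0),1) ((1,0),0)) hphi
    have e4 := congrArg (fun M => M ((0,0),0) ((0,1),1)) hphi
    simp only [Matrix.add_apply, Matrix.smul_apply, Matrix.zero_apply,
      tE00, tE01, tE02, tE03, tE10, tE11, tE12, tE13, tE20, tE21, tE22, tE23,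
      tE30, tE31, tE32, tE33, tE40, tE41, tE42, tE43, tE50, tE51, tE52, tE53,
      tE60, tE61, tE62, tE63, smul_zero, add_zero, zero_add,
      Complex.real_smul] at e1 e2 e3 e4
    norm_num [Complex.ext_iff] at e1 e2 e3 e4
    refine ⟨by linarith [hF 3 2, hF 5 4], by linarith, by linarith [hF 2 1],
      by linarith, by linarith [hF 4 1], by linarith [hF 5 3], by linarith⟩
  · rw [NF F hF,
      show 2*(F 0 1 - F 2 3 - F 4 5) = 0 by linarith [hF 3 2, hF 5 4],
      show 2*(F 0 2 + F 1 3) = 0 by linarith,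
      show 2*(F 0 3 - F 1 2) = 0 by linarith [hF 2 1],
      show 2*(F 0 4 + F 1 5) = 0 by linarith,
      show 2*(F 0 5 - F 1 4) = 0 by linarith [hF 4 1],
      show 2*(F 2 4 - F 3 5) = 0 by linarith [hF 5 3],
      show 2*(F 2 5 + F 3 4) = 0 by linarith]
    simp
end
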